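/- For the 3-leaf Brownian motion tree model with clade {1,2} (covariance matrix with σ13 = σ23), the coordinates of the inverse satisfy the binomial relation p01·p23 = p02·p13, i.e., κ11κ23 − κ12κ13 + κ12κ23 − κ13κ22 = 0 where K = Σ^{-1}. -/

import Mathlib

theorem stmt_3 (S : Matrix (Fin 3) (Fin 3) ℝ)
    (hsym : S.IsSymm) (hcl : S 0 2 = S 1 2)
    (hinv : IsUnit S.det) (K : Matrix (Fin 3) (Fin 3) ℝ) (hK : K = S⁻¹) :
    K 0 0 * K 1 2 - K 0 1 * K 0 2 + K 0 1 * K 1 2 - K 0 2 * K 1 1 = 0 := by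
  have h10 : S 1 0 = S 0 1 := by
    have := hsym.apply 0 1; simpa using this
  have h20 : S 2 0 = S 0 2 := by
    have := hsym.apply 0 2; simpa using this
  have h21 : S 2 1 = S 1 2 := by
    have := hsym.apply 1 2; simpa using this
  have hd : S.det ≠ 0 := hinv.ne_zero
  subst hK
  rw [Matrix.inv_def]
  simp only [Matrix.smul_apply, Matrix.adjugate_fin_three, Matrix.of_apply,
    Matrix.cons_val', Matrix.cons_val_zero, Matrix.cons_val_one, Matrix.head_cons,
    Matrix.empty_val', Matrix.cons_val_fin_one, Matrix.head_fin_const, smul_eq_mul,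
    Ring.inverse_eq_inv', Matrix.cons_val_two, Matrix.tail_cons]
  field_simp
  rw [h10, h20, h21, hcl]
  ring
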